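/- Let U ⊆ S^m_d be a quasi-stable monomial module and G a P(U)-marked set. Then for every degree s the degree-s component of the S-module ⟨G⟩ generated by G decomposes as an A-module direct sum ⟨G⟩_s = ⟨G^{(s)}⟩^A ⊕ N(U,⟨G⟩)_s, where N(U,⟨G⟩) = ⟨G⟩ ∩ ⟨N(U)⟩. -/

import Mathlib

open MvPolynomial

namespace MB

/-- Exponent (multi-index) of a term in the variables `x_0, …, x_n`. -/
abbrev Exp (n : ℕ) := Fin (n+1) →₀ ℕ

variable {n : ℕ}

/-- Total degree of a term. -/
def degE (α : Exp n) : ℕ := α.sum fun _ e => e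

/-- `x_i` is a multiplicative variable for the term `x^α`, i.e. `x_i ≤ min(x^α)`. -/
def mult (α : Exp n) (i : Fin (n+1)) : Prop := ∀ j ∈ α.support, i ≤ j

/-- Every variable occurring in `x^δ` is multiplicative for `x^α`. -/
def multExp (α δ : Exp n) : Prop := ∀ i ∈ δ.support, mult α i

/-- Pommaret cone of a term. -/
def pommaretCone (α : Exp n) : Set (Exp n) := {γ | ∃ δ, multExp α δ ∧ γ = α + δ}

/-- A set of terms is (the set of terms of) a monomial ideal. -/
def IsMonomialIdeal (T : Set (Exp n)) : Prop := ∀ α ∈ T, ∀ β, α + β ∈ T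

/-- `P` is a Pommaret basis of the set of terms `T`: the terms of `T` are the
disjoint union of the Pommaret cones of the elements of `P`. -/
def IsPommaretBasis (P : Finset (Exp n)) (T : Set (Exp n)) : Prop :=
  (∀ γ, γ ∈ T ↔ ∃ α ∈ P, γ ∈ pommaretCone α) ∧
  ∀ γ : Exp n, ∀ α ∈ P, ∀ β ∈ P, γ ∈ pommaretCone α → γ ∈ pommaretCone β → α = β

/-- Lexicographic order on terms (with `x_n > … > x_0` significance). -/
def lexLt (η δ : Exp n) : Prop := ∃ i, η i < δ i ∧ ∀ j, i < j → η j = δ j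

/-- Terms of the saturation `(J : (x_0,…,x_n)^∞)` of a monomial ideal. -/
def satTerms (T : Set (Exp n)) : Set (Exp n) :=
  {α | ∃ j : ℕ, ∀ β : Exp n, degE β = j → α + β ∈ T}

section ModuleDefs

variable (A : Type*) [CommRing A] {κ : Type*} [Fintype κ] [DecidableEq κ]

/-- The term `x^α e_k` of the free module. -/
noncomputable def termV (α : Exp n) (k : κ) : κ → MvPolynomial (Fin (n+1)) A :=
  Pi.single k (monomial α 1)

variable {A}

/-- Homogeneity of degree `s` in `S^m_d` (with weight vector `d`). -/
def IsHomogV (d : κ → ℤ) (f : κ → MvPolynomial (Fin (n+1)) A) (s : ℤ) : Prop :=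
  ∀ k, ∀ β ∈ (f k).support, (degE β : ℤ) + d k = s

variable (A)

/-- The degree-`s` component `(S^m_d)_s` as an `A`-submodule. -/
noncomputable def homogCompV (d : κ → ℤ) (s : ℤ) :
    Submodule A (κ → MvPolynomial (Fin (n+1)) A) where
  carrier := {f | IsHomogV d f s}
  add_mem' := by
    intro f g hf hg k β hβ
    rcases Finset.mem_union.mp (MvPolynomial.support_add hβ) with h | h
    · exact hf k β h
    · exact hg k β h
  zero_mem' := by intro k β hβ; simp at hβ
  smul_mem' := by
    intro a f hf k β hβ
    exact hf k β (MvPolynomial.support_smul hβ)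

/-- The set `N(U)` of terms of `S^m_d` not belonging to the monomial module `U = ⊕ J^(k) e_k`. -/
def NUTerms (J : κ → Set (Exp n)) : Set (κ → MvPolynomial (Fin (n+1)) A) :=
  {v | ∃ k, ∃ α, α ∉ J k ∧ v = termV A α k}

/-- The degree-`s` part `N(U)_s`. -/
def NUTermsDeg (d : κ → ℤ) (J : κ → Set (Exp n)) (s : ℤ) :
    Set (κ → MvPolynomial (Fin (n+1)) A) :=
  {v | ∃ k, ∃ α, α ∉ J k ∧ (degE α : ℤ) + d k = s ∧ v = termV A α k}

variable {A}

/-- A `P(U)`-marked set: for each `x^α e_k` with `α ∈ P k`, the element `g α k` has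
head term `x^α e_k` (coefficient `1`) and all other terms in `N(U)` of the same degree. -/
def IsMarkedSetV (d : κ → ℤ) (J : κ → Set (Exp n)) (P : κ → Finset (Exp n))
    (g : Exp n → κ → (κ → MvPolynomial (Fin (n+1)) A)) : Prop :=
  ∀ k, ∀ α ∈ P k, ∀ l, ∀ β ∈ ((g α k - termV A α k) l).support,
    β ∉ J l ∧ (degE β : ℤ) + d l = (degE α : ℤ) + d k

/-- The underlying set of elements of the marked set `G`. -/
def GSet (P : κ → Finset (Exp n)) (g : Exp n → κ → (κ → MvPolynomial (Fin (n+1)) A)) :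
    Set (κ → MvPolynomial (Fin (n+1)) A) :=
  {v | ∃ k, ∃ α ∈ P k, v = g α k}

/-- The set `G^(s)` of multiplicative multiples of elements of `G` of degree `s`. -/
def GSdeg (d : κ → ℤ) (P : κ → Finset (Exp n))
    (g : Exp n → κ → (κ → MvPolynomial (Fin (n+1)) A)) (s : ℤ) :
    Set (κ → MvPolynomial (Fin (n+1)) A) :=
  {v | ∃ k, ∃ α ∈ P k, ∃ δ : Exp n, multExp α δ ∧
    (degE δ : ℤ) + (degE α : ℤ) + d k = s ∧ v = (monomial δ (1:A)) • g α k}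

/-- The `S`-submodule `⟨G⟩` generated by the marked set. -/
noncomputable def GmodS (P : κ → Finset (Exp n))
    (g : Exp n → κ → (κ → MvPolynomial (Fin (n+1)) A)) :
    Submodule (MvPolynomial (Fin (n+1)) A) (κ → MvPolynomial (Fin (n+1)) A) :=
  Submodule.span _ (GSet P g)

/-- The degree-`s` component `⟨G⟩_s` as an `A`-submodule. -/
noncomputable def GmodDeg (d : κ → ℤ) (P : κ → Finset (Exp n))
    (g : Exp n → κ → (κ → MvPolynomial (Fin (n+1)) A)) (s : ℤ) :
    Submodule A (κ → MvPolynomial (Fin (n+1)) A) :=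
  (GmodS P g).restrictScalars A ⊓ homogCompV A d s

/-- `G` is a marked basis: `(S^m_d)_s = ⟨G⟩_s ⊕ ⟨N(U)_s⟩^A` for every degree `s`. -/
def MarkedBasisProp (d : κ → ℤ) (J : κ → Set (Exp n)) (P : κ → Finset (Exp n))
    (g : Exp n → κ → (κ → MvPolynomial (Fin (n+1)) A)) : Prop :=
  ∀ s : ℤ,
    homogCompV A d s = GmodDeg d P g s ⊔ Submodule.span A (NUTermsDeg A d J s) ∧
    GmodDeg d P g s ⊓ Submodule.span A (NUTermsDeg A d J s) = ⊥

/-- One step of the reduction relation `→_G`. -/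
def RedStep (P : κ → Finset (Exp n)) (g : Exp n → κ → (κ → MvPolynomial (Fin (n+1)) A))
    (h h' : κ → MvPolynomial (Fin (n+1)) A) : Prop :=
  ∃ k, ∃ α ∈ P k, ∃ η : Exp n, multExp α η ∧
    (h k).coeff (η + α) ≠ 0 ∧
    h' = h - ((h k).coeff (η + α)) • ((monomial η (1:A)) • g α k)

end ModuleDefs

section IdealDefs

variable {A : Type*} [CommRing A]

/-- A `P(J)`-marked set of polynomials. -/
def IsMarkedSetI (T : Set (Exp n)) (P : Finset (Exp n))
    (g : Exp n → MvPolynomial (Fin (n+1)) A) : Prop :=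
  ∀ α ∈ P, ∀ β ∈ (g α - monomial α (1:A)).support, β ∉ T ∧ degE β = degE α

variable (A)

/-- The degree-`s` monomials not in `T`. -/
def NTermsDegI (T : Set (Exp n)) (s : ℕ) : Set (MvPolynomial (Fin (n+1)) A) :=
  {p | ∃ β, β ∉ T ∧ degE β = s ∧ p = monomial β (1:A)}

variable {A}

/-- Degree-`s` part of the ideal generated by the marked set. -/
noncomputable def IdealDegI (P : Finset (Exp n)) (g : Exp n → MvPolynomial (Fin (n+1)) A)
    (s : ℕ) : Submodule A (MvPolynomial (Fin (n+1)) A) :=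
  (Ideal.span (g '' ↑P)).restrictScalars A ⊓ homogeneousSubmodule (Fin (n+1)) A s

/-- A `P(J)`-marked basis of polynomials: `S_s = (G)_s ⊕ ⟨N(J)_s⟩^A` for all `s`. -/
def IsMarkedBasisI (T : Set (Exp n)) (P : Finset (Exp n))
    (g : Exp n → MvPolynomial (Fin (n+1)) A) : Prop :=
  IsMarkedSetI T P g ∧ ∀ s : ℕ,
    homogeneousSubmodule (Fin (n+1)) A s
      = IdealDegI P g s ⊔ Submodule.span A (NTermsDegI A T s) ∧
    IdealDegI P g s ⊓ Submodule.span A (NTermsDegI A T s) = ⊥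

/-- The polynomial `p` involves only multiplicative variables of `x^α`. -/
def multPoly (α : Exp n) (p : MvPolynomial (Fin (n+1)) A) : Prop :=
  ∀ β ∈ p.support, multExp α β

end IdealDefs

section SyzDefs

variable {A : Type*} [CommRing A]

/-- The map `(c_l) ↦ Σ_l c_l f_{α(l)}` whose kernel is `Syz(G)`. -/
noncomputable def syzMap (P : Finset (Exp n)) (g : Exp n → MvPolynomial (Fin (n+1)) A) :
    (↥P → MvPolynomial (Fin (n+1)) A) →ₗ[MvPolynomial (Fin (n+1)) A]
      MvPolynomial (Fin (n+1)) A where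
  toFun c := ∑ l : ↥P, c l * g l.1
  map_add' c c' := by simp [add_mul, Finset.sum_add_distrib]
  map_smul' a c := by simp [Finset.mul_sum, mul_assoc]

/-- Weight vector for the syzygy module: `d_l = deg x^{α(l)}`. -/
def ddeg (P : Finset (Exp n)) : ↥P → ℤ := fun l => (degE l.1 : ℤ)

/-- Terms of the monomial ideal generated by the nonmultiplicative variables of `x^{α(l)}`. -/
def Jsyz (P : Finset (Exp n)) : ↥P → Set (Exp n) :=
  fun l => {β | ∃ i ∈ β.support, ¬ mult (l : Exp n) i}

open Classical in
/-- The claimed Pommaret basis `{x_i e_l : x_i nonmultiplicative for x^{α(l)}}`. -/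
noncomputable def Psyz (P : Finset (Exp n)) : ↥P → Finset (Exp n) := fun l =>
  (Finset.univ.filter fun i : Fin (n+1) => ¬ mult (l : Exp n) i).image
    fun i => Finsupp.single i 1

open Classical in
/-- The syzygy `S_{k;i} = x_i e_k − Σ_l P_l^{k;i} e_l`. -/
noncomputable def Ssyz (P : Finset (Exp n))
    (Pc : ↥P → Fin (n+1) → ↥P → MvPolynomial (Fin (n+1)) A)
    (k : ↥P) (i : Fin (n+1)) : ↥P → MvPolynomial (Fin (n+1)) A :=
  fun l => (if l = k then (X i : MvPolynomial (Fin (n+1)) A) else 0) - Pc k i l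

/-- The set `G_Syz^(s)`. -/
def GSyzDeg (P : Finset (Exp n))
    (Pc : ↥P → Fin (n+1) → ↥P → MvPolynomial (Fin (n+1)) A) (s : ℤ) :
    Set (↥P → MvPolynomial (Fin (n+1)) A) :=
  {v | ∃ k : ↥P, ∃ i : Fin (n+1), ¬ mult (k : Exp n) i ∧ ∃ δ : Exp n,
    (∀ j ∈ δ.support, j ≤ i) ∧ (degE δ : ℤ) + 1 + ddeg P k = s ∧
    v = (monomial δ (1:A)) • Ssyz P Pc k i}

end SyzDefs

section Aux

variable {n : ℕ}

/-- Encoding of a multi-index into the lex order comparing largest index first. -/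
noncomputable def eord (δ : Exp n) : Lex (Fin (n+1) → ℕ) := toLex (fun i => δ (Fin.rev i))

lemma eord_lt_iff {δ η : Exp n} : eord δ < eord η ↔
    ∃ i, δ i < η i ∧ ∀ j, i < j → δ j = η j := by
  constructor
  · rintro ⟨i, hlt, hi⟩
    refine ⟨Fin.rev i, by simpa [eord] using hi, fun j hj => ?_⟩
    have h2 : Fin.rev j < i := by
      have := Fin.rev_lt_rev.mpr hj; simpa using this
    have := hlt (Fin.rev j) h2
    simpa [eord] using this
  · rintro ⟨i, hi, hlt⟩
    refine ⟨Fin.rev i, fun j hj => ?_, by simpa [eord] using hi⟩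
    have h3 : i < Fin.rev j := by
      have := Fin.rev_lt_rev.mpr hj; simpa using this
    simpa [eord] using hlt (Fin.rev j) h3

lemma eord_injective : Function.Injective (eord (n := n)) := by
  intro a b h
  ext i
  have := congrFun (toLex.injective.eq_iff.mp (by exact h)) (Fin.rev i)
  simpa using this

lemma eord_trichotomy (a b : Exp n) : eord a < eord b ∨ a = b ∨ eord b < eord a := by
  have := @Pi.isTrichotomous_lex (Fin (n+1)) (fun _ => ℕ) (· < ·) (fun {_} => (· < ·)) _
    (IsWellFounded.wf)
  rcases lt_trichotomy (eord a) (eord b) with h | h | h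
  · exact Or.inl h
  · exact Or.inr (Or.inl (eord_injective h))
  · exact Or.inr (Or.inr h)

lemma degE_add (α β : Exp n) : degE (α + β) = degE α + degE β := by
  simp [degE, Finsupp.sum_add_index']

lemma self_mem_pommaretCone (α : Exp n) : α ∈ pommaretCone α :=
  ⟨0, by intro i hi; simp at hi, by simp⟩

/-- KEY LEMMA: if `δ + α` is a Pommaret decomposition and `δ + α = η + β` with
`β ∉ T`, then `δ < η` in the lex order. -/
lemma keyA {T : Set (Exp n)} {Q : Finset (Exp n)} (hPB : IsPommaretBasis Q T)
    {α δ η β : Exp n} (hα : α ∈ Q) (hδ : multExp α δ) (heq : δ + α = η + β)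
    (hβ : β ∉ T) : eord δ < eord η := by
  rcases eord_trichotomy δ η with h | h | h
  · exact h
  · subst h
    have : α = β := add_left_cancel heq
    subst this
    exact absurd ((hPB.1 α).mpr ⟨α, hα, self_mem_pommaretCone α⟩) hβ
  · exfalso
    obtain ⟨i, hi, hup⟩ := eord_lt_iff.mp h
    have happ : ∀ j, δ j + α j = η j + β j := by
      intro j
      have := DFunLike.congr_fun heq j
      simpa using this
    have hmulti : mult α i := hδ i (Finsupp.mem_support_iff.mpr (by omega))
    have hαlow : ∀ j, j < i → α j = 0 := by
      intro j hj
      by_contra hne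
      exact absurd (hmulti j (Finsupp.mem_support_iff.mpr hne)) (not_le.mpr hj)
    have hle : ∀ j, α j ≤ β j := by
      intro j
      rcases lt_trichotomy j i with hj | hj | hj
      · simp [hαlow j hj]
      · subst hj; have := happ j; omega
      · have h1 := hup j hj; have := happ j; omega
    have hβθ : β = α + (β - α) := by
      ext j
      have := hle j
      simp only [Finsupp.add_apply, Finsupp.tsub_apply]
      omega
    have hθ : multExp α (β - α) := by
      intro j hj
      have hjne : (β - α) j ≠ 0 := Finsupp.mem_support_iff.mp hj
      have hji : j ≤ i := by
        by_contra hjibig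
        push_neg at hjibig
        have h1 := hup j hjibig
        have h2 := happ j
        have : β j = α j := by omega
        simp [Finsupp.tsub_apply, this] at hjne
      intro l hl
      exact le_trans hji (hmulti l hl)
    exact absurd ((hPB.1 β).mpr ⟨α, hα, β - α, hθ, hβθ⟩) hβ

variable {κ : Type*} [Fintype κ] [DecidableEq κ] {A : Type*} [CommRing A]

lemma smul_single (p q : MvPolynomial (Fin (n+1)) A) (l : κ) :
    p • (Pi.single l q : κ → MvPolynomial (Fin (n+1)) A) = Pi.single l (p * q) := by
  funext j
  by_cases h : j = l
  · subst h; simp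
  · simp [Pi.single_eq_of_ne h]

lemma termV_smul (δ α : Exp n) (k : κ) :
    (monomial δ (1:A)) • termV A α k = termV A (δ + α) k := by
  rw [termV, termV, smul_single, monomial_mul, one_mul]

lemma exists_of_mem_support_monomial_mul {δ γ : Exp n} {q : MvPolynomial (Fin (n+1)) A}
    (h : γ ∈ ((monomial δ (1:A)) * q).support) : ∃ β ∈ q.support, γ = δ + β := by
  have hc : MvPolynomial.coeff γ (monomial δ (1:A) * q) ≠ 0 := MvPolynomial.mem_support_iff.mp h
  rw [mul_comm, MvPolynomial.coeff_mul_monomial'] at hc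
  split_ifs at hc with hle
  · exact ⟨γ - δ, MvPolynomial.mem_support_iff.mpr (by simpa using hc),
      (add_tsub_cancel_of_le hle).symm⟩
  · exact absurd rfl hc

end Aux

section Aux2
set_option linter.unusedSectionVars false

variable {n : ℕ} {κ : Type*} [Fintype κ] [DecidableEq κ] {A : Type*} [CommRing A]
variable {d : κ → ℤ} {J : κ → Set (Exp n)} {P : κ → Finset (Exp n)}
variable {gb : Exp n → κ → (κ → MvPolynomial (Fin (n+1)) A)}

lemma termV_homog (α : Exp n) (k : κ) :
    termV A α k ∈ homogCompV A d ((degE α : ℤ) + d k) := by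
  intro l β hβ
  rw [termV] at hβ
  by_cases h : l = k
  · subst h
    rw [Pi.single_eq_same] at hβ
    have := MvPolynomial.support_monomial_subset hβ
    simp only [Finset.mem_singleton] at this
    subst this
    rfl
  · rw [Pi.single_eq_of_ne h] at hβ
    simp at hβ

lemma gb_homog (hG : IsMarkedSetV d J P gb) {k : κ} {α : Exp n} (hα : α ∈ P k) :
    gb α k ∈ homogCompV A d ((degE α : ℤ) + d k) := by
  intro l β hβ
  have h2 : gb α k l = (gb α k - termV A α k) l + termV A α k l := by simp
  rw [h2] at hβ
  rcases Finset.mem_union.mp (MvPolynomial.support_add hβ) with h | h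
  · exact (hG k α hα l β h).2
  · exact termV_homog α k l β h

lemma homog_monomial_smul {s' : ℤ} {f : κ → MvPolynomial (Fin (n+1)) A}
    (hf : f ∈ homogCompV A d s') (δ : Exp n) :
    (monomial δ (1:A)) • f ∈ homogCompV A d ((degE δ : ℤ) + s') := by
  intro l β hβ
  rw [Pi.smul_apply, smul_eq_mul] at hβ
  obtain ⟨β', hβ', rfl⟩ := exists_of_mem_support_monomial_mul hβ
  have := hf l β' hβ'
  rw [degE_add]
  push_cast
  linarith

lemma mem_of_forall_support (Q : Submodule A (κ → MvPolynomial (Fin (n+1)) A))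
    (f : κ → MvPolynomial (Fin (n+1)) A)
    (h : ∀ l, ∀ β ∈ (f l).support, termV A β l ∈ Q) : f ∈ Q := by
  have hf : f = ∑ l, ∑ β ∈ (f l).support, ((f l).coeff β) • termV A β l := by
    funext j
    rw [Finset.sum_apply]
    rw [Finset.sum_eq_single j]
    · rw [Finset.sum_apply]
      simp only [Pi.smul_apply, termV, Pi.single_eq_same]
      rw [show ∀ p : MvPolynomial (Fin (n+1)) A,
        ∑ β ∈ p.support, p.coeff β • monomial β (1:A) = p from fun p => by
          conv_rhs => rw [← p.support_sum_monomial_coeff]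
          refine Finset.sum_congr rfl fun β _ => ?_
          rw [MvPolynomial.smul_monomial, smul_eq_mul, mul_one]]
    · intro l _ hl
      rw [Finset.sum_apply]
      refine Finset.sum_eq_zero fun β _ => ?_
      simp [termV, Pi.single_eq_of_ne (Ne.symm hl)]
    · intro hj
      exact absurd (Finset.mem_univ j) hj
  have hmem : (∑ l, ∑ β ∈ (f l).support, ((f l).coeff β) • termV A β l) ∈ Q :=
    Submodule.sum_mem _ fun l _ => Submodule.sum_mem _ fun β hβ =>
      Submodule.smul_mem _ _ (h l β hβ)
  rwa [← hf] at hmem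

/-- The submodule of vectors all of whose terms avoid `J`. -/
noncomputable def offJ (A : Type*) [CommRing A] (J : κ → Set (Exp n)) :
    Submodule A (κ → MvPolynomial (Fin (n+1)) A) where
  carrier := {f | ∀ l, ∀ β ∈ (f l).support, β ∉ J l}
  add_mem' := by
    intro f g hf hg l β hβ
    rw [Pi.add_apply] at hβ
    rcases Finset.mem_union.mp (MvPolynomial.support_add hβ) with h | h
    · exact hf l β h
    · exact hg l β h
  zero_mem' := by intro l β hβ; simp at hβ
  smul_mem' := by
    intro a f hf l β hβ
    rw [Pi.smul_apply] at hβ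
    exact hf l β (MvPolynomial.support_smul hβ)

lemma span_NU_le_offJ : Submodule.span A (NUTerms A J) ≤ offJ A J := by
  rw [Submodule.span_le]
  rintro v ⟨k, α, hα, rfl⟩
  intro l β hβ
  rw [termV] at hβ
  by_cases h : l = k
  · subst h
    rw [Pi.single_eq_same] at hβ
    have := MvPolynomial.support_monomial_subset hβ
    simp only [Finset.mem_singleton] at this
    subst this
    exact hα
  · rw [Pi.single_eq_of_ne h] at hβ
    simp at hβ

end Aux2

section Aux3
set_option linter.unusedSectionVars false

variable {n : ℕ} {κ : Type*} [Fintype κ] [DecidableEq κ] {A : Type*} [CommRing A]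
variable {d : κ → ℤ} {J : κ → Set (Exp n)} {P : κ → Finset (Exp n)}
variable {gb : Exp n → κ → (κ → MvPolynomial (Fin (n+1)) A)}

/-- Projection onto the degree-`s` homogeneous component. -/
noncomputable def projs (d : κ → ℤ) (s : ℤ) :
    (κ → MvPolynomial (Fin (n+1)) A) →ₗ[A] (κ → MvPolynomial (Fin (n+1)) A) where
  toFun f := fun k => if 0 ≤ s - d k then
      (homogeneousComponent (s - d k).toNat) (f k) else 0
  map_add' f g := by
    funext k
    by_cases h : 0 ≤ s - d k
    · simp only [Pi.add_apply, if_pos h, map_add]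
    · simp only [Pi.add_apply, if_neg h, add_zero]
  map_smul' a f := by
    funext k
    by_cases h : 0 ≤ s - d k
    · simp only [Pi.smul_apply, if_pos h, map_smul, RingHom.id_apply]
    · simp only [Pi.smul_apply, if_neg h, smul_zero, RingHom.id_apply]

lemma degE_eq_degree (β : Exp n) : β.degree = degE β := by
  rw [degE, Finsupp.degree, Finsupp.sum]
  rfl

lemma projs_eq_self {s : ℤ} {f : κ → MvPolynomial (Fin (n+1)) A}
    (hf : f ∈ homogCompV A d s) : projs d s f = f := by
  funext k
  show (if 0 ≤ s - d k then (homogeneousComponent (s - d k).toNat) (f k) else 0) = f k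
  by_cases h : 0 ≤ s - d k
  · rw [if_pos h]
    apply MvPolynomial.ext
    intro m
    rw [MvPolynomial.coeff_homogeneousComponent]
    split_ifs with hm
    · rfl
    · by_contra hne
      have hmem : m ∈ (f k).support := MvPolynomial.mem_support_iff.mpr fun h0 => hne h0.symm
      have hdg := hf k m hmem
      apply hm
      rw [degE_eq_degree]
      omega
  · rw [if_neg h]
    symm
    rw [← MvPolynomial.support_eq_empty, Finset.eq_empty_iff_forall_notMem]
    intro m hm
    have := hf k m hm
    omega
  
lemma projs_eq_zero {s s' : ℤ} {f : κ → MvPolynomial (Fin (n+1)) A}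
    (hf : f ∈ homogCompV A d s') (hne : s' ≠ s) : projs d s f = 0 := by
  funext k
  show (if 0 ≤ s - d k then (homogeneousComponent (s - d k).toNat) (f k) else 0) = 0
  by_cases h : 0 ≤ s - d k
  · rw [if_pos h]
    apply MvPolynomial.ext
    intro m
    rw [MvPolynomial.coeff_homogeneousComponent]
    split_ifs with hm
    · by_contra hne2
      have hmem : m ∈ (f k).support := MvPolynomial.mem_support_iff.mpr (by simpa using hne2)
      have hdg := hf k m hmem
      rw [degE_eq_degree] at hm
      omega
    · simp
  · rw [if_neg h]

/-- Multiplicative monomial multiples of elements of the marked set. -/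
def MMset (P : κ → Finset (Exp n)) (gb : Exp n → κ → (κ → MvPolynomial (Fin (n+1)) A)) :
    Set (κ → MvPolynomial (Fin (n+1)) A) :=
  {v | ∃ k, ∃ α ∈ P k, ∃ δ : Exp n, multExp α δ ∧ v = (monomial δ (1:A)) • gb α k}

end Aux3

section Aux4
set_option linter.unusedSectionVars false

variable {n : ℕ} {κ : Type*} [Fintype κ] [DecidableEq κ] {A : Type*} [CommRing A]
variable {d : κ → ℤ} {J : κ → Set (Exp n)} {P : κ → Finset (Exp n)}
variable {gb : Exp n → κ → (κ → MvPolynomial (Fin (n+1)) A)}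

lemma mem_J_of_rep {T : Set (Exp n)} {Q : Finset (Exp n)} (hPB : IsPommaretBasis Q T)
    {α δ : Exp n} (hα : α ∈ Q) (hδ : multExp α δ) : δ + α ∈ T :=
  (hPB.1 _).mpr ⟨α, hα, δ, hδ, add_comm δ α⟩

/-- The basic reduction decomposition of a term `x^{δ'} x^{α'} e_l`. -/
lemma termV_decomp {l : κ} {α' δ' : Exp n} :
    termV A (δ' + α') l = (monomial δ' (1:A)) • gb α' l
      - (monomial δ' (1:A)) • (gb α' l - termV A α' l) := by
  rw [smul_sub, sub_sub_cancel, termV_smul]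

lemma redLemma_aux (hQS : ∀ k, IsMonomialIdeal (J k) ∧ IsPommaretBasis (P k) (J k))
    (hG : IsMarkedSetV d J P gb) :
    ∀ (δ : Exp n) (l : κ) (β : Exp n), β ∉ J l →
    termV A (δ + β) l ∈ Submodule.span A (MMset P gb) ⊔ Submodule.span A (NUTerms A J) := by
  have wf : WellFounded fun a b : Exp n => eord a < eord b :=
    InvImage.wf eord (IsWellFounded.wf)
  intro δ
  refine wf.induction (C := fun δ => ∀ (l : κ) (β : Exp n), β ∉ J l →
    termV A (δ + β) l ∈ Submodule.span A (MMset P gb) ⊔ Submodule.span A (NUTerms A J))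
    δ ?_
  intro δ IH l β hβ
  by_cases hJ : δ + β ∈ J l
  · obtain ⟨α', hα', δ', hm', heq⟩ := ((hQS l).2.1 (δ + β)).mp hJ
    -- heq : δ + β = α' + δ'
    have heq' : δ' + α' = δ + β := by rw [heq, add_comm]
    have hlt : eord δ' < eord δ := keyA (hQS l).2 hα' hm' heq' hβ
    rw [← heq', termV_decomp]
    refine Submodule.sub_mem _ ?_ ?_
    · exact Submodule.mem_sup_left (Submodule.subset_span ⟨l, α', hα', δ', hm', rfl⟩)
    · refine mem_of_forall_support _ _ ?_
      intro j γ hγ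
      rw [Pi.smul_apply, smul_eq_mul] at hγ
      obtain ⟨β'', hβ'', rfl⟩ := exists_of_mem_support_monomial_mul hγ
      have hβ''J : β'' ∉ J j := (hG l α' hα' j β'' hβ'').1
      exact IH δ' hlt j β'' hβ''J
  · exact Submodule.mem_sup_right (Submodule.subset_span ⟨l, δ + β, hJ, rfl⟩)

lemma redLemma (hQS : ∀ k, IsMonomialIdeal (J k) ∧ IsPommaretBasis (P k) (J k))
    (hG : IsMarkedSetV d J P gb) (γ : Exp n) (l : κ) :
    termV A γ l ∈ Submodule.span A (MMset P gb) ⊔ Submodule.span A (NUTerms A J) := by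
  by_cases hJ : γ ∈ J l
  · obtain ⟨α', hα', δ', hm', heq⟩ := ((hQS l).2.1 γ).mp hJ
    have heq' : δ' + α' = γ := by rw [heq, add_comm]
    rw [← heq', termV_decomp]
    refine Submodule.sub_mem _ ?_ ?_
    · exact Submodule.mem_sup_left (Submodule.subset_span ⟨l, α', hα', δ', hm', rfl⟩)
    · refine mem_of_forall_support _ _ ?_
      intro j γ' hγ'
      rw [Pi.smul_apply, smul_eq_mul] at hγ'
      obtain ⟨β'', hβ'', rfl⟩ := exists_of_mem_support_monomial_mul hγ'
      have hβ''J : β'' ∉ J j := (hG l α' hα' j β'' hβ'').1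
      exact redLemma_aux hQS hG δ' j β'' hβ''J
  · exact Submodule.mem_sup_right (Submodule.subset_span ⟨l, γ, hJ, rfl⟩)

lemma top_mem (hQS : ∀ k, IsMonomialIdeal (J k) ∧ IsPommaretBasis (P k) (J k))
    (hG : IsMarkedSetV d J P gb) (f : κ → MvPolynomial (Fin (n+1)) A) :
    f ∈ Submodule.span A (MMset P gb) ⊔ Submodule.span A (NUTerms A J) :=
  mem_of_forall_support _ f fun l β _ => redLemma hQS hG β l

end Aux4

section Aux5
set_option linter.unusedSectionVars false

variable {n : ℕ} {κ : Type*} [Fintype κ] [DecidableEq κ] {A : Type*} [CommRing A]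
variable {d : κ → ℤ} {J : κ → Set (Exp n)} {P : κ → Finset (Exp n)}
variable {gb : Exp n → κ → (κ → MvPolynomial (Fin (n+1)) A)}

lemma part2_lemma (hQS : ∀ k, IsMonomialIdeal (J k) ∧ IsPommaretBasis (P k) (J k))
    (hG : IsMarkedSetV d J P gb) (s : ℤ) {v : κ → MvPolynomial (Fin (n+1)) A}
    (hv : v ∈ Submodule.span A (GSdeg d P gb s))
    (hoff : ∀ l, ∀ β ∈ (v l).support, β ∉ J l) : v = 0 := by
  classical
  obtain ⟨c, hcsub, hcsum⟩ := Submodule.mem_span_set.mp hv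
  rcases Finset.eq_empty_or_nonempty c.support with he | hne
  · rw [← hcsum, Finsupp.sum, he, Finset.sum_empty]
  · exfalso
    have hdat : ∀ x ∈ c.support, ∃ p : κ × Exp n × Exp n, p.2.1 ∈ P p.1 ∧
        multExp p.2.1 p.2.2 ∧ ((degE p.2.2 : ℤ) + (degE p.2.1 : ℤ) + d p.1 = s) ∧
        x = (monomial p.2.2 (1:A)) • gb p.2.1 p.1 := by
      intro x hx
      obtain ⟨k, α, hα, δ, hm, hdeg, hxe⟩ := hcsub hx
      exact ⟨⟨k, α, δ⟩, hα, hm, hdeg, hxe⟩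
    choose dat hdat1 hdat2 hdat3 hdat4 using hdat
    set f : (κ → MvPolynomial (Fin (n+1)) A) → Lex (Fin (n+1) → ℕ) :=
      fun x => if hx : x ∈ c.support then eord (dat x hx).2.2 else toLex 0 with hfdef
    obtain ⟨m, hmF, hmax⟩ : ∃ m ∈ c.support.image f, ∀ x ∈ c.support.image f, ¬ m < x := by
      obtain ⟨m, hm⟩ := Finset.exists_maximal (hne.image f)
      exact ⟨m, hm.1, fun x hx hlt => lt_irrefl m (lt_of_lt_of_le hlt (hm.2 hx hlt.le))⟩
    obtain ⟨x₀, hx₀, hfx₀⟩ := Finset.mem_image.mp hmF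
    have hmaxx : ∀ x (hx : x ∈ c.support), ¬ eord (dat x₀ hx₀).2.2 < eord (dat x hx).2.2 := by
      intro x hx hlt
      refine hmax (f x) (Finset.mem_image_of_mem f hx) ?_
      have h2 : f x = eord (dat x hx).2.2 := dif_pos hx
      have h3 : f x₀ = eord (dat x₀ hx₀).2.2 := dif_pos hx₀
      rw [← hfx₀, h3, h2]
      exact hlt
    set k₀ := (dat x₀ hx₀).1 with hk₀def
    set α₀ := (dat x₀ hx₀).2.1 with hα₀def
    set δ₀ := (dat x₀ hx₀).2.2 with hδ₀def
    have hα₀P : α₀ ∈ P k₀ := hdat1 x₀ hx₀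
    have hm₀ : multExp α₀ δ₀ := hdat2 x₀ hx₀
    have hγJ : δ₀ + α₀ ∈ J k₀ := mem_J_of_rep (hQS k₀).2 hα₀P hm₀
    have hα₀J : α₀ ∈ J k₀ := ((hQS k₀).2.1 α₀).mpr ⟨α₀, hα₀P, self_mem_pommaretCone α₀⟩
    have hc0 : MvPolynomial.coeff (δ₀ + α₀) (v k₀) = 0 := by
      by_contra h
      exact hoff k₀ _ (MvPolynomial.mem_support_iff.mpr h) hγJ
    have hvk : v k₀ = ∑ x ∈ c.support, c x • x k₀ := by
      rw [← hcsum, Finsupp.sum, Finset.sum_apply]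
      rfl
    have hco : MvPolynomial.coeff (δ₀ + α₀) (v k₀)
        = ∑ x ∈ c.support, c x * MvPolynomial.coeff (δ₀ + α₀) (x k₀) := by
      rw [hvk, MvPolynomial.coeff_sum]
      refine Finset.sum_congr rfl fun x _ => ?_
      rw [MvPolynomial.coeff_smul, smul_eq_mul]
    have hcoeff_x : ∀ x (hx : x ∈ c.support), x ≠ x₀ →
        MvPolynomial.coeff (δ₀ + α₀) (x k₀) = 0 := by
      intro x hx hne2
      rw [hdat4 x hx, Pi.smul_apply, smul_eq_mul, mul_comm,
        MvPolynomial.coeff_mul_monomial']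
      split_ifs with hle
      · rw [mul_one]
        set β : Exp n := (δ₀ + α₀) - (dat x hx).2.2 with hβdef
        have hγβ : (dat x hx).2.2 + β = δ₀ + α₀ := add_tsub_cancel_of_le hle
        have hsplit : gb (dat x hx).2.1 (dat x hx).1 k₀
            = (gb (dat x hx).2.1 (dat x hx).1 - termV A (dat x hx).2.1 (dat x hx).1) k₀
              + termV A (dat x hx).2.1 (dat x hx).1 k₀ := by simp
        rw [hsplit, MvPolynomial.coeff_add]
        have h1 : MvPolynomial.coeff β
            ((gb (dat x hx).2.1 (dat x hx).1 - termV A (dat x hx).2.1 (dat x hx).1) k₀) = 0 := by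
          by_contra hN
          have hβJ : β ∉ J k₀ :=
            (hG (dat x hx).1 (dat x hx).2.1 (hdat1 x hx) k₀ β
              (MvPolynomial.mem_support_iff.mpr hN)).1
          exact hmaxx x hx (keyA (hQS k₀).2 hα₀P hm₀ hγβ.symm hβJ)
        have h2 : MvPolynomial.coeff β (termV A (dat x hx).2.1 (dat x hx).1 k₀) = 0 := by
          rw [termV]
          rcases eq_or_ne (dat x hx).1 k₀ with hkk | hkk
          · rw [hkk, Pi.single_eq_same, MvPolynomial.coeff_monomial]
            split_ifs with hab
            · exfalso
              have hPx : (dat x hx).2.1 ∈ P k₀ := by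
                have := hdat1 x hx; rwa [hkk] at this
              have hcone : δ₀ + α₀ ∈ pommaretCone (dat x hx).2.1 :=
                ⟨(dat x hx).2.2, hdat2 x hx, by rw [← hγβ, ← hab, add_comm]⟩
              have hcone0 : δ₀ + α₀ ∈ pommaretCone α₀ := ⟨δ₀, hm₀, add_comm δ₀ α₀⟩
              have hαeq : α₀ = (dat x hx).2.1 :=
                (hQS k₀).2.2 (δ₀ + α₀) α₀ hα₀P (dat x hx).2.1 hPx hcone0 hcone
              have hβα : β = α₀ := by rw [hαeq, hab]
              have hsum : (dat x hx).2.2 + α₀ = δ₀ + α₀ := by rw [hβα] at hγβ; exact hγβ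
              have hδeq : (dat x hx).2.2 = δ₀ := add_right_cancel hsum
              exact hne2 (by rw [hdat4 x hx, hdat4 x₀ hx₀, hδeq, ← hαeq, hkk])
            · rfl
          · rw [Pi.single_eq_of_ne (Ne.symm hkk), MvPolynomial.coeff_zero]
        rw [h1, h2, add_zero]
      · rfl
    have hcoeff_x0 : MvPolynomial.coeff (δ₀ + α₀) (x₀ k₀) = 1 := by
      rw [hdat4 x₀ hx₀, Pi.smul_apply, smul_eq_mul, mul_comm,
        MvPolynomial.coeff_mul_monomial']
      rw [if_pos (self_le_add_right δ₀ α₀), mul_one, add_tsub_cancel_left]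
      have hsplit : gb α₀ k₀ k₀ = (gb α₀ k₀ - termV A α₀ k₀) k₀ + termV A α₀ k₀ k₀ := by simp
      rw [hsplit, MvPolynomial.coeff_add]
      have h1 : MvPolynomial.coeff α₀ ((gb α₀ k₀ - termV A α₀ k₀) k₀) = 0 := by
        by_contra hN
        exact (hG k₀ α₀ hα₀P k₀ α₀ (MvPolynomial.mem_support_iff.mpr hN)).1 hα₀J
      rw [h1, termV, Pi.single_eq_same, MvPolynomial.coeff_monomial, if_pos rfl, zero_add]
    rw [hco, Finset.sum_eq_single x₀ (fun b hb hbne => by rw [hcoeff_x b hb hbne, mul_zero])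
      (fun h => absurd hx₀ h)] at hc0
    rw [hcoeff_x0, mul_one] at hc0
    exact Finsupp.mem_support_iff.mp hx₀ hc0

end Aux5

section Aux6
set_option linter.unusedSectionVars false

variable {n : ℕ} {κ : Type*} [Fintype κ] [DecidableEq κ] {A : Type*} [CommRing A]
variable {d : κ → ℤ} {J : κ → Set (Exp n)} {P : κ → Finset (Exp n)}
variable {gb : Exp n → κ → (κ → MvPolynomial (Fin (n+1)) A)}

lemma MM_le_res : Submodule.span A (MMset P gb) ≤ (GmodS P gb).restrictScalars A := by
  rw [Submodule.span_le]
  rintro _ ⟨k, α, hα, δ, hm, rfl⟩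
  show (monomial δ (1:A)) • gb α k ∈ (GmodS P gb).restrictScalars A
  rw [Submodule.restrictScalars_mem]
  exact Submodule.smul_mem (GmodS P gb) _ (Submodule.subset_span ⟨k, α, hα, rfl⟩)

lemma GS_le_res {s : ℤ} :
    Submodule.span A (GSdeg d P gb s) ≤ (GmodS P gb).restrictScalars A := by
  rw [Submodule.span_le]
  rintro _ ⟨k, α, hα, δ, hm, hdeg, rfl⟩
  show (monomial δ (1:A)) • gb α k ∈ (GmodS P gb).restrictScalars A
  rw [Submodule.restrictScalars_mem]
  exact Submodule.smul_mem (GmodS P gb) _ (Submodule.subset_span ⟨k, α, hα, rfl⟩)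

lemma GS_le_homog (hG : IsMarkedSetV d J P gb) {s : ℤ} :
    Submodule.span A (GSdeg d P gb s) ≤ homogCompV A d s := by
  rw [Submodule.span_le]
  rintro _ ⟨k, α, hα, δ, hm, hdeg, rfl⟩
  have h1 := homog_monomial_smul (gb_homog hG hα) δ
  have h2 : (degE δ : ℤ) + ((degE α : ℤ) + d k) = s := by linarith
  rw [h2] at h1
  exact h1

end Aux6

/-- Theorem `markedSetChar` (iv): `⟨G⟩_s = ⟨G^(s)⟩^A ⊕ N(U,⟨G⟩)_s`. -/
theorem statement7 {n : ℕ} {κ : Type*} [Fintype κ] [DecidableEq κ] (hm : Nonempty κ)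
    {A : Type*} [CommRing A] [IsNoetherianRing A]
    (d : κ → ℤ) (J : κ → Set (Exp n)) (P : κ → Finset (Exp n))
    (hQS : ∀ k, IsMonomialIdeal (J k) ∧ IsPommaretBasis (P k) (J k))
    (gb : Exp n → κ → (κ → MvPolynomial (Fin (n+1)) A))
    (hG : IsMarkedSetV d J P gb) :
    ∀ s : ℤ,
      GmodDeg d P gb s
        = Submodule.span A (GSdeg d P gb s) ⊔
          ((GmodS P gb).restrictScalars A ⊓ Submodule.span A (NUTerms A J)
            ⊓ homogCompV A d s) ∧
      Submodule.span A (GSdeg d P gb s) ⊓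
          ((GmodS P gb).restrictScalars A ⊓ Submodule.span A (NUTerms A J)
            ⊓ homogCompV A d s) = ⊥ := by
  intro s
  classical
  constructor
  · apply le_antisymm
    · intro h hh
      have hh' : h ∈ (GmodS P gb).restrictScalars A ⊓ homogCompV A d s := hh
      obtain ⟨hhG, hhs⟩ := Submodule.mem_inf.mp hh'
      obtain ⟨u, hu, w, hw, huw⟩ := Submodule.mem_sup.mp (top_mem hQS hG h)
      have hπadd : projs d s u + projs d s w = h := by
        rw [← map_add, huw, projs_eq_self hhs]
      have hmapMM : Submodule.map (projs (A := A) d s) (Submodule.span A (MMset P gb)) ≤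
          Submodule.span A (GSdeg d P gb s) ⊓ Submodule.span A (MMset P gb) := by
        rw [Submodule.map_span, Submodule.span_le]
        rintro _ ⟨v, ⟨k, α, hα, δ, hm, rfl⟩, rfl⟩
        have hhom : (monomial δ (1:A)) • gb α k ∈
            homogCompV A d ((degE δ : ℤ) + ((degE α : ℤ) + d k)) :=
          homog_monomial_smul (gb_homog hG hα) δ
        by_cases hdeg : (degE δ : ℤ) + ((degE α : ℤ) + d k) = s
        · rw [projs_eq_self (by rw [hdeg] at hhom; exact hhom)]
          exact Submodule.mem_inf.mpr
            ⟨Submodule.subset_span ⟨k, α, hα, δ, hm, by linarith, rfl⟩,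
             Submodule.subset_span ⟨k, α, hα, δ, hm, rfl⟩⟩
        · rw [projs_eq_zero hhom hdeg]
          exact Submodule.zero_mem _
      have hmapNN : Submodule.map (projs (A := A) d s) (Submodule.span A (NUTerms A J)) ≤
          Submodule.span A (NUTerms A J) := by
        rw [Submodule.map_span, Submodule.span_le]
        rintro _ ⟨v, ⟨k, α, hα, rfl⟩, rfl⟩
        have hhom := termV_homog (d := d) (A := A) α k
        by_cases hdeg : (degE α : ℤ) + d k = s
        · rw [projs_eq_self (by rw [hdeg] at hhom; exact hhom)]
          exact Submodule.subset_span ⟨k, α, hα, rfl⟩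
        · rw [projs_eq_zero hhom hdeg]
          exact Submodule.zero_mem _
      obtain ⟨huG, huM⟩ := Submodule.mem_inf.mp (hmapMM (Submodule.mem_map_of_mem hu))
      have hw' := hmapNN (Submodule.mem_map_of_mem hw)
      have hresu : projs d s u ∈ (GmodS P gb).restrictScalars A := MM_le_res huM
      have hhomu : projs d s u ∈ homogCompV A d s := GS_le_homog hG huG
      have hweq : projs d s w = h - projs d s u := by
        rw [← hπadd]; abel
      refine Submodule.mem_sup.mpr ⟨projs d s u, huG, projs d s w, ?_, hπadd⟩
      refine Submodule.mem_inf.mpr ⟨Submodule.mem_inf.mpr ⟨?_, hw'⟩, ?_⟩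
      · rw [hweq]; exact Submodule.sub_mem _ hhG hresu
      · rw [hweq]; exact Submodule.sub_mem _ hhs hhomu
    · refine sup_le ?_ ?_
      · exact le_inf GS_le_res (GS_le_homog hG)
      · exact le_inf (inf_le_left.trans inf_le_left) inf_le_right
  · rw [eq_bot_iff]
    intro v hv
    obtain ⟨hv1, hv2⟩ := Submodule.mem_inf.mp hv
    obtain ⟨hv3, _⟩ := Submodule.mem_inf.mp hv2
    obtain ⟨_, hvNN⟩ := Submodule.mem_inf.mp hv3
    have hoff : ∀ l, ∀ β ∈ (v l).support, β ∉ J l :=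
      fun l β hβ => (span_NU_le_offJ hvNN) l β hβ
    simpa using part2_lemma hQS hG s hv1 hoff


end MB
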